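/- Let q be a real number with 0 < q < 1 and let x be a complex number with |x| < 1/(1−q) such that cos_q(q^k x) ≠ 0 for every integer k ≥ 0. Then the series (1−q)·∑_{k=0}^{∞} q^k x · (1 + tan_q(q^k x)·tan_q(q^{k+1} x)) converges and equals tan_q(x); that is, ∫_0^x (1 + tan_q(t)·tan_q(qt)) d_q t = tan_q(x), where tan_q(z) = sin_q(z)/cos_q(z). -/

import Mathlib

open Filter Topology

/-- The `q`-basic number `[n]_q = (1 - q^n)/(1 - q)`. -/
noncomputable def qNum (q : ℝ) (n : ℕ) : ℝ := (1 - q ^ n) / (1 - q)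

/-- The `q`-factorial `[n]_q! = [1]_q [2]_q ⋯ [n]_q`, with `[0]_q! = 1`. -/
noncomputable def qFact (q : ℝ) (n : ℕ) : ℝ := ∏ j ∈ Finset.range n, qNum q (j + 1)

/-- The Gaussian binomial coefficient `[n]_q! / ([k]_q! [n-k]_q!)`. -/
noncomputable def qBinom (q : ℝ) (n k : ℕ) : ℝ := qFact q n / (qFact q k * qFact q (n - k))

/-- The `q`-exponential `e_q(z) = ∑ z^n / [n]_q!`. -/
noncomputable def qExp (q : ℝ) (z : ℂ) : ℂ := ∑' n : ℕ, z ^ n / (qFact q n : ℂ)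

/-- The `q`-sine `sin_q(z) = ∑ (-1)^n z^(2n+1) / [2n+1]_q!`. -/
noncomputable def qSin (q : ℝ) (z : ℂ) : ℂ :=
  ∑' n : ℕ, (-1 : ℂ) ^ n * z ^ (2 * n + 1) / (qFact q (2 * n + 1) : ℂ)

/-- The `q`-cosine `cos_q(z) = ∑ (-1)^n z^(2n) / [2n]_q!`. -/
noncomputable def qCos (q : ℝ) (z : ℂ) : ℂ :=
  ∑' n : ℕ, (-1 : ℂ) ^ n * z ^ (2 * n) / (qFact q (2 * n) : ℂ)

/-- The `q`-addition power `(x ⊕_q y)^n = ∑_{k=0}^n binom_q(n,k) x^k y^(n-k)`. -/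
noncomputable def qAddPow (q : ℝ) (x y : ℂ) (n : ℕ) : ℂ :=
  ∑ k ∈ Finset.range (n + 1), (qBinom q n k : ℂ) * x ^ k * y ^ (n - k)

/-- The `q`-subtraction power `(x ⊖_q y)^n = ∑_{k=0}^n binom_q(n,k) (-1)^(n-k) x^k y^(n-k)`. -/
noncomputable def qSubPow (q : ℝ) (x y : ℂ) (n : ℕ) : ℂ :=
  ∑ k ∈ Finset.range (n + 1), (qBinom q n k : ℂ) * (-1 : ℂ) ^ (n - k) * x ^ k * y ^ (n - k)

/-- The `q`-tangent `tan_q(z) = sin_q(z)/cos_q(z)`. -/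
noncomputable def qTan (q : ℝ) (z : ℂ) : ℂ := qSin q z / qCos q z

/-- The second `q`-exponential `E_q(z) = ∑ q^(n(n-1)/2) z^n / [n]_q!`. -/
noncomputable def qExpE (q : ℝ) (z : ℂ) : ℂ :=
  ∑' n : ℕ, (q : ℂ) ^ (n * (n - 1) / 2) * z ^ n / (qFact q n : ℂ)
section aux
variable {q : ℝ}

lemma qNum_pos (hq0 : 0 < q) (hq1 : q < 1) (n : ℕ) : 0 < qNum q (n + 1) := by
  apply div_pos
  · have : q ^ (n+1) < 1 := pow_lt_one₀ hq0.le hq1 (Nat.succ_ne_zero n)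
    linarith
  · linarith

lemma qNum_ge_one (hq0 : 0 < q) (hq1 : q < 1) (n : ℕ) : 1 ≤ qNum q (n + 1) := by
  rw [qNum, le_div_iff₀ (by linarith)]
  have : q ^ (n+1) ≤ q ^ 1 := pow_le_pow_of_le_one hq0.le hq1.le (by omega)
  simp only [pow_one] at this
  linarith

lemma qFact_pos (hq0 : 0 < q) (hq1 : q < 1) (n : ℕ) : 0 < qFact q n := by
  apply Finset.prod_pos
  intro j _
  exact qNum_pos hq0 hq1 j

lemma qFact_succ (n : ℕ) : qFact q (n + 1) = qFact q n * qNum q (n + 1) :=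
  Finset.prod_range_succ _ _

lemma qFact_le_succ (hq0 : 0 < q) (hq1 : q < 1) (n : ℕ) : qFact q n ≤ qFact q (n + 1) := by
  rw [qFact_succ]
  nlinarith [qFact_pos hq0 hq1 n, qNum_ge_one hq0 hq1 n]

lemma qFact_key (hq1 : q < 1) (n : ℕ) :
    (1 - q) * qFact q (n + 1) = (1 - q ^ (n + 1)) * qFact q n := by
  rw [qFact_succ, qNum]
  have : (1:ℝ) - q ≠ 0 := by intro h; nlinarith
  field_simp

lemma summable_master (hq0 : 0 < q) (hq1 : q < 1) {r : ℝ} (hr : 0 < r)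
    (h : r < 1 / (1 - q)) :
    Summable (fun n : ℕ => r ^ n / qFact q n) := by
  have h1q : (0:ℝ) < 1 - q := by linarith
  apply summable_of_ratio_test_tendsto_lt_one (l := r * (1 - q))
  · rw [lt_div_iff₀ h1q] at h; nlinarith
  · filter_upwards with n
    have := qFact_pos hq0 hq1 n
    positivity
  · have hlim : Tendsto (fun n : ℕ => r * ((1 - q) / (1 - q ^ (n + 1)))) atTop
        (𝓝 (r * (1 - q))) := by
      have h2 : Tendsto (fun n : ℕ => (1:ℝ) - q ^ (n+1)) atTop (𝓝 1) := by
        have := (tendsto_pow_atTop_nhds_zero_of_lt_one hq0.le hq1).comp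
          (tendsto_add_atTop_nat 1)
        simpa using (tendsto_const_nhds (x := (1:ℝ))).sub this
      have := ((tendsto_const_nhds (x := (1 - q))).div h2 (by norm_num)).const_mul r
      simpa using this
    apply hlim.congr
    intro n
    have hf := qFact_pos hq0 hq1
    have hn1 : (0:ℝ) < 1 - q ^ (n + 1) := by
      have : q ^ (n+1) < 1 := pow_lt_one₀ hq0.le hq1 (Nat.succ_ne_zero n)
      linarith
    have hkey := qFact_key hq1 n
    rw [Real.norm_of_nonneg (by have := hf (n+1); positivity),
        Real.norm_of_nonneg (by have := hf n; positivity)]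
    have h1 := (hf n).ne'
    have h2 := (hf (n+1)).ne'
    have h3 : r ^ n ≠ 0 := by positivity
    field_simp
    linear_combination (r * r ^ n) * hkey

lemma norm_term (hq0 : 0 < q) (hq1 : q < 1) (z : ℂ) (n p m : ℕ) :
    ‖(-1 : ℂ) ^ n * z ^ p / (qFact q m : ℂ)‖ = ‖z‖ ^ p / qFact q m := by
  have h := qFact_pos hq0 hq1 m
  rw [norm_div, norm_mul, norm_pow, norm_pow]
  simp [Complex.norm_real, abs_of_pos h]

lemma summable_cosR (hq0 : 0 < q) (hq1 : q < 1) {x : ℂ} (hx : ‖x‖ < 1 / (1 - q))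
    (hx0 : x ≠ 0) : Summable (fun n : ℕ => ‖x‖ ^ (2 * n) / qFact q (2 * n)) := by
  have h := (summable_master hq0 hq1 (norm_pos_iff.mpr hx0) hx).comp_injective
    (i := fun n : ℕ => 2 * n) (fun a b hab => by simpa using hab)
  exact h

lemma summable_sinR (hq0 : 0 < q) (hq1 : q < 1) {x : ℂ} (hx : ‖x‖ < 1 / (1 - q))
    (hx0 : x ≠ 0) : Summable (fun n : ℕ => ‖x‖ ^ (2 * n + 1) / qFact q (2 * n + 1)) := by
  have h := (summable_master hq0 hq1 (norm_pos_iff.mpr hx0) hx).comp_injective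
    (i := fun n : ℕ => 2 * n + 1) (fun a b hab => by simpa using hab)
  exact h

lemma summable_norm_sin (hq0 : 0 < q) (hq1 : q < 1) {x z : ℂ} (hx : ‖x‖ < 1 / (1 - q))
    (hx0 : x ≠ 0) (hz : ‖z‖ ≤ ‖x‖) :
    Summable (fun n : ℕ => ‖(-1 : ℂ) ^ n * z ^ (2 * n + 1) / (qFact q (2 * n + 1) : ℂ)‖) := by
  refine Summable.of_nonneg_of_le (fun n => norm_nonneg _) (fun n => ?_)
    (summable_sinR hq0 hq1 hx hx0)
  rw [norm_term hq0 hq1]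
  gcongr
  exact (qFact_pos hq0 hq1 _).le

lemma summable_norm_cos (hq0 : 0 < q) (hq1 : q < 1) {x z : ℂ} (hx : ‖x‖ < 1 / (1 - q))
    (hx0 : x ≠ 0) (hz : ‖z‖ ≤ ‖x‖) :
    Summable (fun n : ℕ => ‖(-1 : ℂ) ^ n * z ^ (2 * n) / (qFact q (2 * n) : ℂ)‖) := by
  refine Summable.of_nonneg_of_le (fun n => norm_nonneg _) (fun n => ?_)
    (summable_cosR hq0 hq1 hx hx0)
  rw [norm_term hq0 hq1]
  gcongr
  exact (qFact_pos hq0 hq1 _).le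

lemma hasSum_qSin (hq0 : 0 < q) (hq1 : q < 1) {x z : ℂ} (hx : ‖x‖ < 1 / (1 - q))
    (hx0 : x ≠ 0) (hz : ‖z‖ ≤ ‖x‖) :
    HasSum (fun n : ℕ => (-1 : ℂ) ^ n * z ^ (2 * n + 1) / (qFact q (2 * n + 1) : ℂ))
      (qSin q z) :=
  (Summable.of_norm (summable_norm_sin hq0 hq1 hx hx0 hz)).hasSum

lemma hasSum_qCos (hq0 : 0 < q) (hq1 : q < 1) {x z : ℂ} (hx : ‖x‖ < 1 / (1 - q))
    (hx0 : x ≠ 0) (hz : ‖z‖ ≤ ‖x‖) :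
    HasSum (fun n : ℕ => (-1 : ℂ) ^ n * z ^ (2 * n) / (qFact q (2 * n) : ℂ))
      (qCos q z) :=
  (Summable.of_norm (summable_norm_cos hq0 hq1 hx hx0 hz)).hasSum

lemma qSin_qDeriv (hq0 : 0 < q) (hq1 : q < 1) {x z : ℂ} (hx : ‖x‖ < 1 / (1 - q))
    (hx0 : x ≠ 0) (hz : ‖z‖ ≤ ‖x‖) :
    qSin q z - qSin q ((q : ℂ) * z) = (1 - (q : ℂ)) * z * qCos q z := by
  have hz' : ‖(q : ℂ) * z‖ ≤ ‖x‖ := by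
    rw [norm_mul, Complex.norm_real, Real.norm_of_nonneg hq0.le]
    nlinarith [norm_nonneg z]
  have h1 := hasSum_qSin hq0 hq1 hx hx0 hz
  have h2 := hasSum_qSin hq0 hq1 hx hx0 hz'
  have h3 := (hasSum_qCos hq0 hq1 hx hx0 hz).mul_left ((1 - (q : ℂ)) * z)
  refine (h1.sub h2).unique ?_
  apply h3.congr_fun
  intro n
  have hkey : ((1 : ℂ) - q) * (qFact q (2 * n + 1) : ℂ)
      = (1 - (q : ℂ) ^ (2 * n + 1)) * (qFact q (2 * n) : ℂ) := by
    exact_mod_cast qFact_key (q := q) hq1 (2 * n)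
  have hF1 : ((qFact q (2 * n + 1) : ℝ) : ℂ) ≠ 0 := by
    exact_mod_cast (qFact_pos hq0 hq1 (2 * n + 1)).ne'
  have hF0 : ((qFact q (2 * n) : ℝ) : ℂ) ≠ 0 := by
    exact_mod_cast (qFact_pos hq0 hq1 (2 * n)).ne'
  field_simp
  linear_combination (-z ^ (2 * n + 1)) * hkey

lemma qCos_qDeriv (hq0 : 0 < q) (hq1 : q < 1) {x z : ℂ} (hx : ‖x‖ < 1 / (1 - q))
    (hx0 : x ≠ 0) (hz : ‖z‖ ≤ ‖x‖) :
    qCos q z - qCos q ((q : ℂ) * z) = -((1 - (q : ℂ)) * z) * qSin q z := by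
  have hz' : ‖(q : ℂ) * z‖ ≤ ‖x‖ := by
    rw [norm_mul, Complex.norm_real, Real.norm_of_nonneg hq0.le]
    nlinarith [norm_nonneg z]
  have h1 := hasSum_qCos hq0 hq1 hx hx0 hz
  have h2 := hasSum_qCos hq0 hq1 hx hx0 hz'
  have h3 := (hasSum_qSin hq0 hq1 hx hx0 hz).mul_left (-((1 - (q : ℂ)) * z))
  set F : ℕ → ℂ := fun n =>
    (-1 : ℂ) ^ n * z ^ (2 * n) / (qFact q (2 * n) : ℂ)
      - (-1 : ℂ) ^ n * ((q : ℂ) * z) ^ (2 * n) / (qFact q (2 * n) : ℂ) with hF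
  have h4 : HasSum F (qCos q z - qCos q ((q : ℂ) * z)) := h1.sub h2
  have h5 : HasSum (fun n => F (n + 1)) (-((1 - (q : ℂ)) * z) * qSin q z) := by
    apply h3.congr_fun
    intro n
    have hkey : ((1 : ℂ) - q) * (qFact q (2 * n + 2) : ℂ)
        = (1 - (q : ℂ) ^ (2 * n + 2)) * (qFact q (2 * n + 1) : ℂ) := by
      exact_mod_cast qFact_key (q := q) hq1 (2 * n + 1)
    have hF1 : ((qFact q (2 * n + 2) : ℝ) : ℂ) ≠ 0 := by
      exact_mod_cast (qFact_pos hq0 hq1 (2 * n + 2)).ne'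
    have hF0 : ((qFact q (2 * n + 1) : ℝ) : ℂ) ≠ 0 := by
      exact_mod_cast (qFact_pos hq0 hq1 (2 * n + 1)).ne'
    have e1 : 2 * (n + 1) = 2 * n + 2 := by ring
    show (-1 : ℂ) ^ (n + 1) * z ^ (2 * (n + 1)) / (qFact q (2 * (n + 1)) : ℂ)
      - (-1 : ℂ) ^ (n + 1) * ((q : ℂ) * z) ^ (2 * (n + 1)) / (qFact q (2 * (n + 1)) : ℂ) = _
    rw [e1]
    field_simp
    linear_combination ((-1 : ℂ)) ^ n * z ^ (2 * n + 2) * hkey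
  have h6 : HasSum F (-((1 - (q : ℂ)) * z) * qSin q z) := by
    have := (hasSum_nat_add_iff (f := F) 1).mp h5
    have hF0 : F 0 = 0 := by simp [hF]
    simpa [hF0] using this
  exact h4.unique h6

lemma norm_qSin_le (hq0 : 0 < q) (hq1 : q < 1) {x z : ℂ} (hx : ‖x‖ < 1 / (1 - q))
    (hx0 : x ≠ 0) (hz : ‖z‖ ≤ ‖x‖) :
    ‖qSin q z‖ ≤ ‖z‖ * ∑' n : ℕ, ‖x‖ ^ (2 * n) / qFact q (2 * n) := by
  rw [qSin]
  refine (norm_tsum_le_tsum_norm (summable_norm_sin hq0 hq1 hx hx0 hz)).trans ?_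
  rw [← tsum_mul_left]
  refine Summable.tsum_le_tsum (fun n => ?_) (summable_norm_sin hq0 hq1 hx hx0 hz)
    ((summable_cosR hq0 hq1 hx hx0).mul_left _)
  rw [norm_term hq0 hq1]
  rw [pow_succ']
  rw [mul_div_assoc]
  refine mul_le_mul_of_nonneg_left ?_ (norm_nonneg z)
  refine div_le_div₀ (by positivity) ?_ (qFact_pos hq0 hq1 _) (qFact_le_succ hq0 hq1 _)
  exact pow_le_pow_left₀ (norm_nonneg z) hz _

lemma norm_qCos_sub_one_le (hq0 : 0 < q) (hq1 : q < 1) {x z : ℂ} (hx : ‖x‖ < 1 / (1 - q))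
    (hx0 : x ≠ 0) (hz : ‖z‖ ≤ ‖x‖) :
    ‖qCos q z - 1‖ ≤ ‖z‖ * ∑' n : ℕ, ‖x‖ ^ (2 * n + 1) / qFact q (2 * n + 1) := by
  have h := hasSum_qCos hq0 hq1 hx hx0 hz
  have hs : HasSum (fun n : ℕ =>
      (-1 : ℂ) ^ (n + 1) * z ^ (2 * (n + 1)) / (qFact q (2 * (n + 1)) : ℂ))
      (qCos q z - 1) := by
    refine (hasSum_nat_add_iff (f := fun n : ℕ =>
      (-1 : ℂ) ^ n * z ^ (2 * n) / (qFact q (2 * n) : ℂ)) 1).mpr ?_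
    have h0 : qFact q 0 = 1 := by simp [qFact]
    simpa [h0] using h
  have hbound : ∀ n : ℕ,
      ‖(-1 : ℂ) ^ (n + 1) * z ^ (2 * (n + 1)) / (qFact q (2 * (n + 1)) : ℂ)‖
        ≤ ‖z‖ * (‖x‖ ^ (2 * n + 1) / qFact q (2 * n + 1)) := by
    intro n
    rw [norm_term hq0 hq1]
    have e1 : 2 * (n + 1) = (2 * n + 1) + 1 := by ring
    rw [e1, pow_succ']
    rw [mul_div_assoc]
    refine mul_le_mul_of_nonneg_left ?_ (norm_nonneg z)
    refine div_le_div₀ (by positivity) ?_ (qFact_pos hq0 hq1 _) (qFact_le_succ hq0 hq1 _)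
    exact pow_le_pow_left₀ (norm_nonneg z) hz _
  have hsum2 : Summable (fun n : ℕ => ‖z‖ * (‖x‖ ^ (2 * n + 1) / qFact q (2 * n + 1))) :=
    (summable_sinR hq0 hq1 hx hx0).mul_left _
  have hsum1 : Summable (fun n : ℕ =>
      ‖(-1 : ℂ) ^ (n + 1) * z ^ (2 * (n + 1)) / (qFact q (2 * (n + 1)) : ℂ)‖) :=
    Summable.of_nonneg_of_le (fun n => norm_nonneg _) hbound hsum2
  calc ‖qCos q z - 1‖ = ‖∑' n : ℕ, (-1 : ℂ) ^ (n + 1) * z ^ (2 * (n + 1)) /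
        (qFact q (2 * (n + 1)) : ℂ)‖ := by rw [hs.tsum_eq]
    _ ≤ ∑' n : ℕ, ‖(-1 : ℂ) ^ (n + 1) * z ^ (2 * (n + 1)) / (qFact q (2 * (n + 1)) : ℂ)‖ :=
        norm_tsum_le_tsum_norm hsum1
    _ ≤ ∑' n : ℕ, ‖z‖ * (‖x‖ ^ (2 * n + 1) / qFact q (2 * n + 1)) :=
        Summable.tsum_le_tsum hbound hsum1 hsum2
    _ = ‖z‖ * ∑' n : ℕ, ‖x‖ ^ (2 * n + 1) / qFact q (2 * n + 1) := tsum_mul_left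

lemma tendsto_qTan_zero (hq0 : 0 < q) (hq1 : q < 1) {x : ℂ} (hx : ‖x‖ < 1 / (1 - q))
    (hx0 : x ≠ 0) :
    Tendsto (fun k : ℕ => qTan q ((q : ℂ) ^ k * x)) atTop (𝓝 0) := by
  have hnz : ∀ k : ℕ, ‖(q : ℂ) ^ k * x‖ = q ^ k * ‖x‖ := by
    intro k
    rw [norm_mul, norm_pow, Complex.norm_real, Real.norm_of_nonneg hq0.le]
  have hle : ∀ k : ℕ, ‖(q : ℂ) ^ k * x‖ ≤ ‖x‖ := by
    intro k
    rw [hnz k]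
    nlinarith [pow_le_one₀ hq0.le hq1.le (n := k), norm_nonneg x, pow_nonneg hq0.le k]
  have hq0' : Tendsto (fun k : ℕ => q ^ k) atTop (𝓝 0) :=
    tendsto_pow_atTop_nhds_zero_of_lt_one hq0.le hq1
  have hsin : Tendsto (fun k : ℕ => qSin q ((q : ℂ) ^ k * x)) atTop (𝓝 0) := by
    refine squeeze_zero_norm (a := fun k : ℕ =>
      q ^ k * (‖x‖ * ∑' n : ℕ, ‖x‖ ^ (2 * n) / qFact q (2 * n))) (fun k => ?_) ?_
    · have := norm_qSin_le hq0 hq1 hx hx0 (hle k)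
      rw [hnz k] at this
      linarith [this]
    · simpa using hq0'.mul_const (‖x‖ * ∑' n : ℕ, ‖x‖ ^ (2 * n) / qFact q (2 * n))
  have hcos : Tendsto (fun k : ℕ => qCos q ((q : ℂ) ^ k * x)) atTop (𝓝 1) := by
    rw [tendsto_iff_norm_sub_tendsto_zero]
    refine squeeze_zero_norm (a := fun k : ℕ =>
      q ^ k * (‖x‖ * ∑' n : ℕ, ‖x‖ ^ (2 * n + 1) / qFact q (2 * n + 1))) (fun k => ?_) ?_
    · rw [norm_norm]
      have := norm_qCos_sub_one_le hq0 hq1 hx hx0 (hle k)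
      rw [hnz k] at this
      linarith [this]
    · simpa using hq0'.mul_const (‖x‖ * ∑' n : ℕ, ‖x‖ ^ (2 * n + 1) / qFact q (2 * n + 1))
  have := hsin.div hcos one_ne_zero
  rw [zero_div] at this
  exact this

end aux

/-- `∫_0^x (1 + tan_q(t) tan_q(qt)) d_q t = tan_q(x)`. -/
theorem jackson_integral_qTan (q : ℝ) (hq0 : 0 < q) (hq1 : q < 1) (x : ℂ)
    (hx : ‖x‖ < 1 / (1 - q))
    (hc : ∀ k : ℕ, qCos q ((q : ℂ) ^ k * x) ≠ 0) :
    HasSum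
      (fun k : ℕ =>
        (1 - (q : ℂ)) * ((q : ℂ) ^ k * x) *
          (1 + qTan q ((q : ℂ) ^ k * x) * qTan q ((q : ℂ) ^ (k + 1) * x)))
      (qTan q x) := by
  by_cases hx0 : x = 0
  · subst hx0
    have hsin0 : qSin q 0 = 0 := by
      rw [qSin]
      convert tsum_zero with n
      simp [zero_pow (Nat.succ_ne_zero (2 * n))]
    have : qTan q 0 = 0 := by rw [qTan, hsin0, zero_div]
    simpa [this] using hasSum_zero
  have hx' : ‖x‖ < 1 / (1 - q) := by exact hx
  set g : ℕ → ℂ := fun k => qTan q ((q : ℂ) ^ k * x) with hg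
  have hle : ∀ k : ℕ, ‖(q : ℂ) ^ k * x‖ ≤ ‖x‖ := by
    intro k
    rw [norm_mul, norm_pow, Complex.norm_real, Real.norm_of_nonneg hq0.le]
    nlinarith [pow_le_one₀ hq0.le hq1.le (n := k), norm_nonneg x, pow_nonneg hq0.le k]
  -- the key telescoping identity
  have hterm : ∀ k : ℕ,
      (1 - (q : ℂ)) * ((q : ℂ) ^ k * x) *
        (1 + qTan q ((q : ℂ) ^ k * x) * qTan q ((q : ℂ) ^ (k + 1) * x))
      = g k - g (k + 1) := by
    intro k
    have e1 : (q : ℂ) ^ (k + 1) * x = (q : ℂ) * ((q : ℂ) ^ k * x) := by ring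
    set z : ℂ := (q : ℂ) ^ k * x with hzdef
    have hA := qSin_qDeriv hq0 hq1 hx' hx0 (hle k)
    have hB := qCos_qDeriv hq0 hq1 hx' hx0 (hle k)
    have hsq : qSin q ((q : ℂ) * z) = qSin q z - (1 - (q : ℂ)) * z * qCos q z := by
      linear_combination -hA
    have hcq : qCos q ((q : ℂ) * z) = qCos q z + (1 - (q : ℂ)) * z * qSin q z := by
      linear_combination -hB
    have hcz : qCos q z ≠ 0 := hc k
    have hczq : qCos q z + (1 - (q : ℂ)) * z * qSin q z ≠ 0 := by
      rw [← hcq, ← e1]; exact hc (k + 1)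
    rw [hg]
    simp only [e1, qTan, hsq, hcq]
    rw [← hzdef]
    field_simp
    ring
  have htend : Tendsto g atTop (𝓝 0) := tendsto_qTan_zero hq0 hq1 hx' hx0
  have htend1 : Tendsto (fun k => g (k + 1)) atTop (𝓝 0) :=
    htend.comp (tendsto_add_atTop_nat 1)
  -- summability
  have hb : Tendsto (fun k : ℕ => 1 + g k * g (k + 1)) atTop (𝓝 1) := by
    have := (tendsto_const_nhds (x := (1 : ℂ))).add (htend.mul htend1)
    simpa using this
  have hev : ∀ᶠ k in atTop, ‖(1 : ℂ) + g k * g (k + 1)‖ ≤ 2 := by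
    have : Tendsto (fun k : ℕ => ‖(1 : ℂ) + g k * g (k + 1)‖) atTop (𝓝 1) := by
      simpa using hb.norm
    exact this.eventually_le_const (by norm_num)
  have hsummable : Summable (fun k : ℕ =>
      (1 - (q : ℂ)) * ((q : ℂ) ^ k * x) *
        (1 + qTan q ((q : ℂ) ^ k * x) * qTan q ((q : ℂ) ^ (k + 1) * x))) := by
    apply Summable.of_norm_bounded_eventually_nat
      (g := fun k : ℕ => (1 - q) * ‖x‖ * 2 * q ^ k)
    · exact (summable_geometric_of_lt_one hq0.le hq1).mul_left _
    · filter_upwards [hev] with k hk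
      rw [norm_mul, norm_mul, norm_mul, norm_pow, Complex.norm_real,
        Real.norm_of_nonneg hq0.le]
      have h1 : ‖(1 : ℂ) - q‖ = 1 - q := by
        rw [show (1 : ℂ) - q = ((1 - q : ℝ) : ℂ) by push_cast; ring,
          Complex.norm_real, Real.norm_of_nonneg (by linarith)]
      rw [h1]
      have hqk : (0:ℝ) ≤ q ^ k := pow_nonneg hq0.le k
      have hxn : (0:ℝ) ≤ ‖x‖ := norm_nonneg x
      have : ‖(1 : ℂ) + qTan q ((q : ℂ) ^ k * x) * qTan q ((q : ℂ) ^ (k + 1) * x)‖ ≤ 2 := hk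
      have h2 : (0:ℝ) ≤ (1 - q) * (q ^ k * ‖x‖) := by
        have : (0:ℝ) ≤ 1 - q := by linarith
        positivity
      calc (1 - q) * (q ^ k * ‖x‖) *
            ‖(1 : ℂ) + qTan q ((q : ℂ) ^ k * x) * qTan q ((q : ℂ) ^ (k + 1) * x)‖
          ≤ (1 - q) * (q ^ k * ‖x‖) * 2 := mul_le_mul_of_nonneg_left this h2
        _ = (1 - q) * ‖x‖ * 2 * q ^ k := by ring
  -- partial sums tend to qTan q x
  have hps : Tendsto (fun N : ℕ => ∑ k ∈ Finset.range N,
      ((1 - (q : ℂ)) * ((q : ℂ) ^ k * x) *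
        (1 + qTan q ((q : ℂ) ^ k * x) * qTan q ((q : ℂ) ^ (k + 1) * x))))
      atTop (𝓝 (qTan q x)) := by
    have hsum : ∀ N : ℕ, ∑ k ∈ Finset.range N,
        ((1 - (q : ℂ)) * ((q : ℂ) ^ k * x) *
          (1 + qTan q ((q : ℂ) ^ k * x) * qTan q ((q : ℂ) ^ (k + 1) * x)))
        = g 0 - g N := by
      intro N
      rw [Finset.sum_congr rfl (fun k _ => hterm k)]
      exact Finset.sum_range_sub' g N
    have hg0 : g 0 = qTan q x := by simp [hg]
    have := (tendsto_const_nhds (x := g 0)).sub htend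
    rw [sub_zero, hg0] at this
    exact this.congr (fun N => by rw [hsum N, hg0])
  have h1 := hsummable.hasSum
  have h2 := h1.tendsto_sum_nat
  have := tendsto_nhds_unique h2 hps
  rwa [this] at h1
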